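/- The function K(y) = y·(1 + √(2(y−1)/(y−4))) / ((1 + √(2(y−1)/(y−4))) + (y − 2)) is strictly decreasing on [5, ∞); consequently, for every integer d2 ≥ 5, d2 · B(1,d2) > (d2 + 2) · A(1,d2). -/

import Mathlib

/-- Upper endpoint `A(d1,d2)`. -/
noncomputable def Aval (d1 d2 : ℕ) : ℝ :=
  (d1 : ℝ) / (d1 + d2 * (1 + Real.sqrt (2 * ((d1 : ℝ) + d2) / (d1 * ((d2 : ℝ) - 2))))⁻¹)

/-- Upper endpoint `B(d1,d2)`. -/
noncomputable def Bval (d1 d2 : ℕ) : ℝ :=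
  (d1 : ℝ) / (d1 + ((d2 : ℝ) - 2) *
    (1 + Real.sqrt (2 * ((d1 : ℝ) + d2 - 2) / (d1 * ((d2 : ℝ) - 4))))⁻¹)

/-- `K(y) = y(1 + √(2(y−1)/(y−4))) / ((1 + √(2(y−1)/(y−4))) + (y − 2))`. -/
noncomputable def Kfn (y : ℝ) : ℝ :=
  y * (1 + Real.sqrt (2 * (y - 1) / (y - 4))) /
    ((1 + Real.sqrt (2 * (y - 1) / (y - 4))) + (y - 2))

lemma key_ineq (a b s t : ℝ) (ha : 5 ≤ a) (hab : a < b) (hs : 0 ≤ s) (ht : 0 ≤ t)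
    (hs2 : s^2*(a-4) = 2*(a-1)) (ht2 : t^2*(b-4) = 2*(b-1)) :
    b*(1+t)*((1+s)+(a-2)) < a*(1+s)*((1+t)+(b-2)) := by
  have hs2' : 2 < s^2 := by nlinarith
  have ht2' : 2 < t^2 := by nlinarith
  have hdiff : (s^2 - t^2) * ((a-4)*(b-4)) = 6*(b-a) := by nlinarith
  have hst : t < s := by
    by_contra h
    push_neg at h
    have h2 : s^2 ≤ t^2 := by nlinarith
    nlinarith [mul_pos (show (0:ℝ) < a-4 by linarith) (show (0:ℝ) < b-4 by linarith)]
  nlinarith [hdiff, sq_nonneg (s-t), sq_nonneg (s*t-2), mul_pos (sub_pos.2 hst) (sub_pos.2 hab),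
    sq_nonneg (s*t - s - t), mul_nonneg (mul_nonneg hs ht) (sub_pos.2 hst).le]

lemma K_anti : StrictAntiOn Kfn (Set.Ici (5 : ℝ)) := by
  intro a ha b hb hab
  simp only [Set.mem_Ici] at ha hb
  set s := Real.sqrt (2 * (a - 1) / (a - 4)) with hs_def
  set t := Real.sqrt (2 * (b - 1) / (b - 4)) with ht_def
  have hs0 : 0 ≤ s := Real.sqrt_nonneg _
  have ht0 : 0 ≤ t := Real.sqrt_nonneg _
  have ha4 : (0:ℝ) < a - 4 := by linarith
  have hb4 : (0:ℝ) < b - 4 := by linarith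
  have hs2 : s^2 * (a-4) = 2*(a-1) := by
    rw [hs_def, Real.sq_sqrt (div_nonneg (by linarith) (by linarith))]
    field_simp
  have ht2 : t^2 * (b-4) = 2*(b-1) := by
    rw [ht_def, Real.sq_sqrt (div_nonneg (by linarith) (by linarith))]
    field_simp
  have h1 : (0:ℝ) < (1 + s) + (a - 2) := by linarith
  have h2 : (0:ℝ) < (1 + t) + (b - 2) := by linarith
  unfold Kfn
  rw [div_lt_div_iff₀ h2 h1]
  exact key_ineq a b s t ha hab hs0 ht0 hs2 ht2

theorem K_strictAntiOn_and_consequence :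
    StrictAntiOn Kfn (Set.Ici (5 : ℝ)) ∧
      ∀ d2 : ℕ, 5 ≤ d2 → (d2 : ℝ) * Bval 1 d2 > ((d2 : ℝ) + 2) * Aval 1 d2 := by
  refine ⟨K_anti, fun d2 hd2 => ?_⟩
  have h5 : (5:ℝ) ≤ (d2:ℝ) := by exact_mod_cast hd2
  have hB : (d2 : ℝ) * Bval 1 d2 = Kfn d2 := by
    unfold Bval Kfn
    have harg : 2 * ((1 : ℝ) + d2 - 2) / (1 * ((d2 : ℝ) - 4)) = 2 * ((d2:ℝ) - 1) / ((d2:ℝ) - 4) := by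
      ring_nf
    push_cast
    rw [harg]
    set s := Real.sqrt (2 * ((d2:ℝ) - 1) / ((d2:ℝ) - 4)) with hs_def
    have hs0 : 0 ≤ s := Real.sqrt_nonneg _
    have h1s : (0:ℝ) < 1 + s := by linarith
    field_simp
  have hA : ((d2 : ℝ) + 2) * Aval 1 d2 = Kfn ((d2:ℝ) + 2) := by
    unfold Aval Kfn
    have harg : 2 * ((1 : ℝ) + d2) / (1 * ((d2 : ℝ) - 2)) = 2 * (((d2:ℝ)+2) - 1) / (((d2:ℝ)+2) - 4) := by
      ring_nf
    push_cast
    rw [harg]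
    set s := Real.sqrt (2 * (((d2:ℝ)+2) - 1) / (((d2:ℝ)+2) - 4)) with hs_def
    have hs0 : 0 ≤ s := Real.sqrt_nonneg _
    have h1s : (0:ℝ) < 1 + s := by linarith
    field_simp
    rw [show ((d2:ℝ) + 2 - 2) = d2 by ring, div_self (ne_of_gt (by linarith))]
  rw [hB, hA]
  exact K_anti (Set.mem_Ici.2 h5) (Set.mem_Ici.2 (by linarith)) (by linarith)
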